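/- Let d ≥ 1, Δ = 2^d, n, k ≥ 1, let a, b : {1,…,n} → {1,…,Δ}² be sequences of points such that the multiset T has at most k distinct points, and let σ be an optimal matching. For each i ∈ {0,…,d} and j ∈ {1,…,2d}, let v_i^j be chosen independently and uniformly at random from {0,…,2^i−1}². Call the grid (2^i, v_i^j) good if there is no index m with ‖a(m) − b(σ(m))‖₁ < 2^{i−3}/k and cell_{2^i, v_i^j}(a(m)) ≠ cell_{2^i, v_i^j}(b(σ(m))). Then the probability that for every i ∈ {0,…,d} at least one j ∈ {1,…,2d} gives a good grid (2^i, v_i^j) is at least 1 − (d+1)/2^{2d}. -/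

import Mathlib

/-- ℓ1 norm on ℤ². -/
def l1 (p : ℤ × ℤ) : ℤ := |p.1| + |p.2|

/-- Earth-mover distance between the multisets {a 1,…,a n} and {b 1,…,b n}:
the minimum over permutations σ of ∑ i, ‖a i − b (σ i)‖₁. -/
noncomputable def EMD {n : ℕ} (a b : Fin n → ℤ × ℤ) : ℤ :=
  Finset.univ.inf' Finset.univ_nonempty
    (fun σ : Equiv.Perm (Fin n) => ∑ i, l1 (a i - b (σ i)))

/-- The grid cell of a point p for the grid of cell size L shifted by v
(floor division; `/` on ℤ with positive divisor is floor division). -/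
def cell (L : ℕ) (v p : ℤ × ℤ) : ℤ × ℤ :=
  ((p.1 - v.1) / (L : ℤ), (p.2 - v.2) / (L : ℤ))

/-- The sample space for choosing, independently and uniformly, a shift
w (i, j) ∈ {0,…,2^i−1}² for every level i ∈ {0,…,d} and every j ∈ {1,…,2d}
(here the uniform distribution on this product set is the product of the
per-coordinate uniform distributions). -/
noncomputable def shiftSpace (d : ℕ) : Finset ((Fin (d + 1) × Fin (2 * d)) → ℤ × ℤ) :=
  Fintype.piFinset fun p =>
    Finset.Ico (0 : ℤ) (2 ^ (p.1 : ℕ) : ℤ) ×ˢ Finset.Ico (0 : ℤ) (2 ^ (p.1 : ℕ) : ℤ)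


lemma mod_near (L s x t u : ℤ) (hL : 0 < L) (hx : |x - t| ≤ s)
    (hne : (x - u) / L ≠ (t - u) / L) :
    (t - u) % L < s ∨ L - s ≤ (t - u) % L := by
  by_contra h
  push_neg at h
  obtain ⟨h1, h2⟩ := h
  apply hne
  have habs := abs_le.mp hx
  have key : x - u = ((t - u) % L + (x - t)) + (t - u) / L * L := by
    have h3 := Int.mul_ediv_add_emod (t - u) L
    linear_combination -h3
  rw [key, Int.add_mul_ediv_right _ _ hL.ne']
  rw [Int.ediv_eq_zero_of_lt (by linarith) (by linarith), zero_add]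


lemma card_badX (L s t : ℤ) (hL : 0 < L) (hs : 0 ≤ s) :
    ((Finset.Ico 0 L).filter
        (fun u => (t - u) % L < s ∨ L - s ≤ (t - u) % L)).card ≤ 2 * s.toNat := by
  have h1 : ((Finset.Ico 0 L).filter
        (fun u => (t - u) % L < s ∨ L - s ≤ (t - u) % L)).card
      ≤ (Finset.Ico 0 s ∪ Finset.Ico (L - s) L).card := by
    apply Finset.card_le_card_of_injOn (fun u => (t - u) % L)
    · intro u hu
      simp only [Finset.coe_filter, Set.mem_setOf_eq, Finset.mem_Ico] at hu
      rcases hu.2 with hc | hc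
      · exact Finset.mem_union_left _ (Finset.mem_Ico.mpr ⟨Int.emod_nonneg _ hL.ne', hc⟩)
      · exact Finset.mem_union_right _ (Finset.mem_Ico.mpr ⟨hc, Int.emod_lt_of_pos _ hL⟩)
    · intro u1 hu1 u2 hu2 heq
      simp only [Finset.coe_filter, Set.mem_setOf_eq, Finset.mem_Ico] at hu1 hu2
      have m1 : Int.ModEq L (t - u1) (t - u2) := heq
      have m2 : Int.ModEq L u1 u2 := by
        have := (Int.ModEq.refl t).sub m1
        simpa using this
      have e1 : u1 % L = u1 := Int.emod_eq_of_lt hu1.1.1 hu1.1.2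
      have e2 : u2 % L = u2 := Int.emod_eq_of_lt hu2.1.1 hu2.1.2
      rw [Int.ModEq] at m2
      rw [e1, e2] at m2
      exact m2
  refine h1.trans ?_
  refine (Finset.card_union_le _ _).trans ?_
  have c1 : (Finset.Ico (0:ℤ) s).card = s.toNat := by simp
  have c2 : (Finset.Ico (L - s) L).card = s.toNat := by
    rw [Int.card_Ico]
    congr 1
    omega
  omega


open scoped Classical in
lemma bad_card (N k n : ℕ) (r : ℝ) (hN : 1 ≤ N) (hk : 1 ≤ k)
    (hr : r ≤ (N : ℝ) / (8 * k)) (a b : Fin n → ℤ × ℤ)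
    (hT : (Finset.univ.image b).card ≤ k) (σ : Equiv.Perm (Fin n)) :
    2 * ((Finset.Ico (0:ℤ) (N:ℤ) ×ˢ Finset.Ico (0:ℤ) (N:ℤ)).filter (fun v =>
      ∃ m, ((l1 (a m - b (σ m)) : ℤ) : ℝ) < r ∧
        cell N v (a m) ≠ cell N v (b (σ m)))).card ≤ N * N := by
  have hL : (0:ℤ) < (N:ℤ) := by exact_mod_cast hN
  set L : ℤ := (N : ℤ) with hLdef
  set s : ℤ := (L - 1) / (8 * (k:ℤ)) with hs_def
  have h8k : (0:ℤ) < 8 * (k:ℤ) := by omega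
  have hs0 : 0 ≤ s := Int.ediv_nonneg (by omega) (by omega)
  have hsk : 8 * (k:ℤ) * s ≤ L - 1 := by
    have h := Int.ediv_mul_le (L - 1) h8k.ne'
    rw [hs_def]; linarith
  have hell : ∀ m : Fin n, ((l1 (a m - b (σ m)) : ℤ) : ℝ) < r →
      l1 (a m - b (σ m)) ≤ s := by
    intro m hm'
    have hm := hm'.trans_le hr
    have hkR : (1:ℝ) ≤ (k:ℝ) := by exact_mod_cast hk
    have h8kR : (0:ℝ) < 8 * (k:ℝ) := by linarith
    rw [lt_div_iff₀ h8kR] at hm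
    have hZ : l1 (a m - b (σ m)) * (8 * (k:ℤ)) < L := by exact_mod_cast hm
    rw [hs_def, Int.le_ediv_iff_mul_le h8k]
    omega
  set badX : ℤ → Finset ℤ := fun c => (Finset.Ico 0 L).filter
      (fun u => (c - u) % L < s ∨ L - s ≤ (c - u) % L) with hbadX
  set F : ℤ × ℤ → Finset (ℤ × ℤ) := fun t =>
      badX t.1 ×ˢ Finset.Ico 0 L ∪ Finset.Ico 0 L ×ˢ badX t.2 with hF
  have hsub : ((Finset.Ico (0:ℤ) L ×ˢ Finset.Ico (0:ℤ) L).filter (fun v =>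
      ∃ m, ((l1 (a m - b (σ m)) : ℤ) : ℝ) < r ∧
        cell N v (a m) ≠ cell N v (b (σ m)))) ⊆ (Finset.univ.image b).biUnion F := by
    intro v hv
    rw [Finset.mem_filter] at hv
    obtain ⟨hvbox, m, hm1, hm2⟩ := hv
    rw [Finset.mem_biUnion]
    refine ⟨b (σ m), Finset.mem_image_of_mem b (Finset.mem_univ _), ?_⟩
    have hv1 : v.1 ∈ Finset.Ico (0:ℤ) L := (Finset.mem_product.mp hvbox).1
    have hv2 : v.2 ∈ Finset.Ico (0:ℤ) L := (Finset.mem_product.mp hvbox).2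
    have hls := hell m hm1
    simp only [l1, Prod.fst_sub, Prod.snd_sub] at hls
    have habs1 : |(a m).1 - (b (σ m)).1| ≤ s := by
      have := abs_nonneg ((a m).2 - (b (σ m)).2); linarith
    have habs2 : |(a m).2 - (b (σ m)).2| ≤ s := by
      have := abs_nonneg ((a m).1 - (b (σ m)).1); linarith
    have hne : ((a m).1 - v.1) / L ≠ ((b (σ m)).1 - v.1) / L ∨
        ((a m).2 - v.2) / L ≠ ((b (σ m)).2 - v.2) / L := by
      by_contra hC
      push_neg at hC
      exact hm2 (by unfold cell; rw [← hLdef, hC.1, hC.2])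
    rcases hne with h | h
    · refine Finset.mem_union_left _ (Finset.mem_product.mpr ⟨?_, hv2⟩)
      exact Finset.mem_filter.mpr ⟨hv1, mod_near L s _ _ _ hL habs1 h⟩
    · refine Finset.mem_union_right _ (Finset.mem_product.mpr ⟨hv1, ?_⟩)
      exact Finset.mem_filter.mpr ⟨hv2, mod_near L s _ _ _ hL habs2 h⟩
  have hIco : (Finset.Ico (0:ℤ) L).card = N := by
    rw [Int.card_Ico]; omega
  have hFcard : ∀ t : ℤ × ℤ, (F t).card ≤ 4 * s.toNat * N := by
    intro t
    refine (Finset.card_union_le _ _).trans ?_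
    rw [Finset.card_product, Finset.card_product, hIco]
    have hb1 := card_badX L s t.1 hL hs0
    have hb2 := card_badX L s t.2 hL hs0
    calc (badX t.1).card * N + N * (badX t.2).card
        ≤ 2 * s.toNat * N + N * (2 * s.toNat) :=
          add_le_add (Nat.mul_le_mul_right _ hb1) (Nat.mul_le_mul_left _ hb2)
      _ = 4 * s.toNat * N := by ring
  have hcard := (Finset.card_le_card hsub).trans (Finset.card_biUnion_le)
  have hsum : ∑ t ∈ Finset.univ.image b, (F t).card ≤ k * (4 * s.toNat * N) := by
    calc ∑ t ∈ Finset.univ.image b, (F t).card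
        ≤ ∑ _t ∈ Finset.univ.image b, 4 * s.toNat * N :=
          Finset.sum_le_sum (fun t _ => hFcard t)
      _ = (Finset.univ.image b).card * (4 * s.toNat * N) := by
          rw [Finset.sum_const, smul_eq_mul]
      _ ≤ k * (4 * s.toNat * N) := Nat.mul_le_mul_right _ hT
  have h8 : 8 * k * s.toNat ≤ N - 1 := by
    have h1 : ((8 * k * s.toNat : ℕ) : ℤ) ≤ (N:ℤ) - 1 := by
      push_cast [Int.toNat_of_nonneg hs0]
      linarith
    omega
  calc 2 * ((Finset.Ico (0:ℤ) L ×ˢ Finset.Ico (0:ℤ) L).filter _).card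
      ≤ 2 * (k * (4 * s.toNat * N)) := by
        exact Nat.mul_le_mul_left _ (hcard.trans hsum)
    _ = (8 * k * s.toNat) * N := by ring
    _ ≤ (N - 1) * N := Nat.mul_le_mul_right _ h8
    _ ≤ N * N := Nat.mul_le_mul_right _ (Nat.sub_le N 1)


open scoped Classical in
theorem exists_good_grid_probability (d n k : ℕ) (hd : 1 ≤ d) (hn : 1 ≤ n) (hk : 1 ≤ k)
    (a b : Fin n → ℤ × ℤ)
    (ha : ∀ i, 1 ≤ (a i).1 ∧ (a i).1 ≤ 2 ^ d ∧ 1 ≤ (a i).2 ∧ (a i).2 ≤ 2 ^ d)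
    (hb : ∀ i, 1 ≤ (b i).1 ∧ (b i).1 ≤ 2 ^ d ∧ 1 ≤ (b i).2 ∧ (b i).2 ≤ 2 ^ d)
    (hT : (Finset.univ.image b).card ≤ k)
    (σ : Equiv.Perm (Fin n))
    (hopt : ∀ τ : Equiv.Perm (Fin n),
      ∑ i, l1 (a i - b (σ i)) ≤ ∑ i, l1 (a i - b (τ i))) :
    1 - ((d : ℝ) + 1) / 2 ^ (2 * d) ≤
      (((shiftSpace d).filter fun w =>
          ∀ i : Fin (d + 1), ∃ j : Fin (2 * d),
            ¬ ∃ m, (l1 (a m - b (σ m)) : ℝ) < (2 : ℝ) ^ (i : ℕ) / (8 * k) ∧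
              cell (2 ^ (i : ℕ)) (w (i, j)) (a m) ≠
                cell (2 ^ (i : ℕ)) (w (i, j)) (b (σ m))).card : ℝ) /
        ((shiftSpace d).card : ℝ) := by
  -- basic casts
  have hcast : ∀ i : ℕ, (((2:ℕ) ^ i : ℕ) : ℤ) = (2:ℤ) ^ i := fun i => by push_cast; ring
  -- boxes
  set box : ℕ → Finset (ℤ × ℤ) := fun i =>
    Finset.Ico (0:ℤ) (((2:ℕ) ^ i : ℕ) : ℤ) ×ˢ Finset.Ico (0:ℤ) (((2:ℕ) ^ i : ℕ) : ℤ) with hbox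
  have hSS : shiftSpace d = Fintype.piFinset (fun p : Fin (d+1) × Fin (2*d) => box p.1) := by
    unfold shiftSpace
    congr 1
  have hboxcard : ∀ i : ℕ, (box i).card = 2 ^ i * 2 ^ i := by
    intro i
    have h1 : (Finset.Ico (0:ℤ) (((2:ℕ) ^ i : ℕ) : ℤ)).card = 2 ^ i := by
      rw [Int.card_Ico, sub_zero, Int.toNat_natCast]
    show (Finset.Ico (0:ℤ) (((2:ℕ) ^ i : ℕ) : ℤ) ×ˢ Finset.Ico (0:ℤ) (((2:ℕ) ^ i : ℕ) : ℤ)).card = 2 ^ i * 2 ^ i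
    rw [Finset.card_product, h1]
  -- Bad predicate
  set Bad : Fin (d+1) → (ℤ × ℤ) → Prop := fun i v =>
    ∃ m, (l1 (a m - b (σ m)) : ℝ) < (2 : ℝ) ^ (i : ℕ) / (8 * k) ∧
      cell (2 ^ (i : ℕ)) v (a m) ≠ cell (2 ^ (i : ℕ)) v (b (σ m)) with hBad
  set badF : Fin (d+1) → Finset (ℤ × ℤ) := fun i => (box (i:ℕ)).filter (Bad i) with hbadF
  have hbadFcard : ∀ i : Fin (d+1), 2 * (badF i).card ≤ 2 ^ (i:ℕ) * 2 ^ (i:ℕ) := by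
    intro i
    have hr : ((2:ℝ) ^ (i:ℕ) / (8 * k)) ≤ (((2:ℕ) ^ (i:ℕ) : ℕ) : ℝ) / (8 * k) := by
      push_cast
      exact le_rfl
    exact bad_card (2 ^ (i:ℕ)) k n _ (Nat.one_le_two_pow) hk hr a b hT σ
  have hbadFsub : ∀ i : Fin (d+1), badF i ⊆ box (i:ℕ) := fun i => Finset.filter_subset _ _
  -- the bad event sets at level i
  set A : Fin (d+1) → Finset ((Fin (d+1) × Fin (2*d)) → ℤ × ℤ) := fun i =>
    (shiftSpace d).filter (fun w => ∀ j : Fin (2*d), Bad i (w (i, j))) with hA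
  have hAeq : ∀ i, A i =
      Fintype.piFinset (fun p : Fin (d+1) × Fin (2*d) =>
        if p.1 = i then badF i else box p.1) := by
    intro i
    ext w
    rw [hA]
    simp only [Finset.mem_filter, hSS, Fintype.mem_piFinset]
    constructor
    · rintro ⟨hw, hball⟩ p
      by_cases h : p.1 = i
      · rw [if_pos h]
        refine Finset.mem_filter.mpr ⟨?_, ?_⟩
        · have := hw p
          rwa [h] at this
        · have hp : ((i, p.2) : Fin (d+1) × Fin (2*d)) = p := by
            rw [← h]
          rw [← hp]
          exact hball p.2
      · rw [if_neg h]
        exact hw p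
    · intro hw
      constructor
      · intro p
        have := hw p
        by_cases h : p.1 = i
        · rw [if_pos h] at this
          have := hbadFsub i this
          rwa [h]
        · rwa [if_neg h] at this
      · intro j
        have := hw (i, j)
        rw [if_pos rfl] at this
        exact (Finset.mem_filter.mp this).2
  have hAcard : ∀ i, (A i).card * 2 ^ (2*d) ≤ (shiftSpace d).card := by
    intro i
    have h2 : (2:ℕ) ^ (2*d) = ∏ p : Fin (d+1) × Fin (2*d), (if p.1 = i then 2 else 1) := by
      rw [Fintype.prod_prod_type]
      have hin : ∀ x : Fin (d+1),
          (∏ _j : Fin (2*d), (if x = i then (2:ℕ) else 1)) = if x = i then 2^(2*d) else 1 := by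
        intro x
        by_cases h : x = i
        · simp [h]
        · simp [h]
      rw [Finset.prod_congr rfl (fun x _ => hin x)]
      simp
    rw [hAeq i, Fintype.card_piFinset, hSS, Fintype.card_piFinset, h2,
      ← Finset.prod_mul_distrib]
    apply Finset.prod_le_prod'
    intro p _
    by_cases h : p.1 = i
    · rw [if_pos h, if_pos h, h, hboxcard]
      have := hbadFcard i
      linarith
    · rw [if_neg h, if_neg h, mul_one]
  set P : ((Fin (d+1) × Fin (2*d)) → ℤ × ℤ) → Prop :=
    fun w => ∀ i : Fin (d+1), ∃ j : Fin (2*d), ¬ Bad i (w (i, j)) with hP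
  have hsubbad : (shiftSpace d).filter (fun w => ¬ P w) ⊆ Finset.univ.biUnion A := by
    intro w hw
    rw [Finset.mem_filter] at hw
    obtain ⟨hw1, hw2⟩ := hw
    simp only [hP, not_forall, not_exists, not_not] at hw2
    obtain ⟨i, hi⟩ := hw2
    refine Finset.mem_biUnion.mpr ⟨i, Finset.mem_univ _, ?_⟩
    rw [hA]
    exact Finset.mem_filter.mpr ⟨hw1, hi⟩
  have hBadTotal : ((shiftSpace d).filter (fun w => ¬ P w)).card * 2^(2*d)
      ≤ (d+1) * (shiftSpace d).card := by
    calc ((shiftSpace d).filter (fun w => ¬ P w)).card * 2^(2*d)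
        ≤ (∑ i : Fin (d+1), (A i).card) * 2^(2*d) :=
          Nat.mul_le_mul_right _ ((Finset.card_le_card hsubbad).trans Finset.card_biUnion_le)
      _ = ∑ i : Fin (d+1), (A i).card * 2^(2*d) := by rw [Finset.sum_mul]
      _ ≤ ∑ _i : Fin (d+1), (shiftSpace d).card := Finset.sum_le_sum (fun i _ => hAcard i)
      _ = (d+1) * (shiftSpace d).card := by
          rw [Finset.sum_const, Finset.card_univ, Fintype.card_fin, smul_eq_mul]
  have hpos : 0 < (shiftSpace d).card := by
    rw [hSS, Fintype.card_piFinset]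
    apply Finset.prod_pos
    intro p _
    rw [hboxcard]
    positivity
  show 1 - ((d : ℝ) + 1) / 2 ^ (2 * d) ≤
      (((shiftSpace d).filter P).card : ℝ) / ((shiftSpace d).card : ℝ)
  have hsplit : ((shiftSpace d).filter P).card
      + ((shiftSpace d).filter (fun w => ¬ P w)).card = (shiftSpace d).card :=
    Finset.card_filter_add_card_filter_not P
  have hTR : (0:ℝ) < ((shiftSpace d).card : ℝ) := by exact_mod_cast hpos
  have h2pow : (0:ℝ) < 2^(2*d) := by positivity
  rw [le_div_iff₀ hTR]
  have hcast2 : ((((shiftSpace d).filter (fun w => ¬ P w)).card : ℝ)) * 2^(2*d)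
      ≤ ((d:ℝ)+1) * ((shiftSpace d).card : ℝ) := by exact_mod_cast hBadTotal
  have hGeq : ((((shiftSpace d).filter P).card : ℝ))
      = ((shiftSpace d).card : ℝ) - (((shiftSpace d).filter (fun w => ¬ P w)).card : ℝ) := by
    have h := hsplit
    have : ((((shiftSpace d).filter P).card : ℝ))
        + (((shiftSpace d).filter (fun w => ¬ P w)).card : ℝ)
        = ((shiftSpace d).card : ℝ) := by exact_mod_cast h
    linarith
  rw [hGeq, sub_mul, one_mul]
  have hB : ((((shiftSpace d).filter (fun w => ¬ P w)).card : ℝ))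
      ≤ ((d:ℝ)+1)/2^(2*d) * ((shiftSpace d).card : ℝ) := by
    rw [div_mul_eq_mul_div, le_div_iff₀ h2pow]
    linarith
  linarith
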